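/- Let φ : [0,1] → ℝ be twice continuously differentiable on (0,1) with |φ''(p)| ≤ W p^{α-2} + c for all p ∈ (0,1), where α ∈ [3/2, 2), and suppose φ'(0) = 0 (as a limit). Then the second-order modulus of smoothness satisfies ω²(φ, t) ≤ C t^α for some constant C > 0 and all t ∈ (0,1), where ω²(φ,t) = sup_{h∈(0,t]} sup_x |φ(x+h) - 2φ(x) + φ(x-h)| (supremum over x with x±h ∈ [0,1]). -/

import Mathlib

lemma rpow_subadd {a b s : ℝ} (ha : 0 ≤ a) (hb : 0 ≤ b) (hs0 : 0 ≤ s) (hs1 : s ≤ 1) :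
    (a + b) ^ s ≤ a ^ s + b ^ s := by
  have h := NNReal.coe_le_coe.2 (NNReal.rpow_add_le_add_rpow a.toNNReal b.toNNReal hs0 hs1)
  push_cast [Real.coe_toNNReal _ ha, Real.coe_toNNReal _ hb] at h
  exact h

lemma holder_deriv (α : ℝ) (hα1 : 3 / 2 ≤ α) (hα2 : α < 2)
    (W c : ℝ) (hW : 0 < W) (hc : 0 ≤ c) (φ' φ'' : ℝ → ℝ)
    (hd2 : ∀ p ∈ Set.Ioo (0:ℝ) 1, HasDerivAt φ' (φ'' p) p)
    (hd2cont : ContinuousOn φ'' (Set.Ioo 0 1))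
    (hbound : ∀ p ∈ Set.Ioo (0:ℝ) 1, |φ'' p| ≤ W * p ^ (α - 2) + c)
    {p q : ℝ} (hp : 0 < p) (hpq : p < q) (hq : q < 1) :
    |φ' q - φ' p| ≤ (W / (α - 1) + c) * (q - p) ^ (α - 1) := by
  have hα1' : (1:ℝ) < α := by linarith
  have hαm1 : (0:ℝ) < α - 1 := by linarith
  have hsub : Set.Icc p q ⊆ Set.Ioo (0:ℝ) 1 := fun x hx =>
    ⟨lt_of_lt_of_le hp hx.1, lt_of_le_of_lt hx.2 hq⟩
  have husub : Set.uIcc p q ⊆ Set.Ioo (0:ℝ) 1 := by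
    rwa [Set.uIcc_of_le hpq.le]
  have hint : IntervalIntegrable φ'' MeasureTheory.volume p q :=
    (hd2cont.mono husub).intervalIntegrable
  have hftc : ∫ x in p..q, φ'' x = φ' q - φ' p := by
    refine intervalIntegral.integral_eq_sub_of_hasDerivAt (fun x hx => ?_) hint
    exact hd2 x (husub hx)
  have hbc : ContinuousOn (fun x : ℝ => W * x ^ (α - 2) + c) (Set.Icc p q) := by
    refine ContinuousOn.add (ContinuousOn.mul continuousOn_const ?_) continuousOn_const
    exact continuousOn_id.rpow_const (fun x hx => Or.inl (ne_of_gt (hsub hx).1))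
  have hbint : IntervalIntegrable (fun x : ℝ => W * x ^ (α - 2) + c) MeasureTheory.volume p q := by
    rw [intervalIntegrable_iff_integrableOn_Icc_of_le hpq.le]
    exact hbc.integrableOn_compact isCompact_Icc
  have hbc1 : ContinuousOn (fun x : ℝ => W * x ^ (α - 2)) (Set.Icc p q) := by
    refine ContinuousOn.mul continuousOn_const ?_
    exact continuousOn_id.rpow_const (fun x hx => Or.inl (ne_of_gt (hsub hx).1))
  have hbint1 : IntervalIntegrable (fun x : ℝ => W * x ^ (α - 2)) MeasureTheory.volume p q := by
    rw [intervalIntegrable_iff_integrableOn_Icc_of_le hpq.le]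
    exact hbc1.integrableOn_compact isCompact_Icc
  have habs : |∫ x in p..q, φ'' x| ≤ |∫ x in p..q, W * x ^ (α - 2) + c| := by
    rw [← Real.norm_eq_abs]
    refine intervalIntegral.norm_integral_le_abs_of_norm_le ?_ hbint
    filter_upwards [MeasureTheory.ae_restrict_mem measurableSet_uIoc] with x hx
    rw [Set.uIoc_of_le hpq.le] at hx
    exact hbound x (hsub ⟨le_of_lt hx.1, hx.2⟩)
  have hrint : ∫ x in p..q, x ^ (α - 2) = (q ^ (α - 1) - p ^ (α - 1)) / (α - 1) := by
    rw [integral_rpow (Or.inl (by linarith)), show α - 2 + 1 = α - 1 by ring]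
  have hcomp : ∫ x in p..q, W * x ^ (α - 2) + c
      = W * ((q ^ (α - 1) - p ^ (α - 1)) / (α - 1)) + c * (q - p) := by
    rw [intervalIntegral.integral_add hbint1 intervalIntegrable_const,
        intervalIntegral.integral_const_mul, hrint, intervalIntegral.integral_const,
        smul_eq_mul]
    ring
  have hmono : p ^ (α - 1) ≤ q ^ (α - 1) := Real.rpow_le_rpow hp.le hpq.le hαm1.le
  have hval : |∫ x in p..q, W * x ^ (α - 2) + c|
      = W * ((q ^ (α - 1) - p ^ (α - 1)) / (α - 1)) + c * (q - p) := by
    rw [hcomp, abs_of_nonneg]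
    have : 0 ≤ (q ^ (α - 1) - p ^ (α - 1)) / (α - 1) := by
      apply div_nonneg (by linarith) hαm1.le
    have h2 := mul_nonneg hc (by linarith : (0:ℝ) ≤ q - p)
    have h3 := mul_nonneg hW.le this
    linarith
  have hqp1 : q - p ≤ 1 := by linarith
  have hqp0 : 0 < q - p := by linarith
  have h1 : q ^ (α - 1) - p ^ (α - 1) ≤ (q - p) ^ (α - 1) := by
    have := rpow_subadd (a := q - p) (b := p) (s := α - 1) hqp0.le hp.le hαm1.le (by linarith)
    rw [show q - p + p = q by ring] at this
    linarith
  have h2 : q - p ≤ (q - p) ^ (α - 1) := by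
    calc q - p = (q - p) ^ (1:ℝ) := (Real.rpow_one _).symm
    _ ≤ (q - p) ^ (α - 1) := Real.rpow_le_rpow_of_exponent_ge hqp0 hqp1 (by linarith)
  have e1 : W * ((q ^ (α - 1) - p ^ (α - 1)) / (α - 1)) ≤ W * ((q - p) ^ (α - 1) / (α - 1)) := by
    gcongr
  have e2 : c * (q - p) ≤ c * (q - p) ^ (α - 1) := mul_le_mul_of_nonneg_left h2 hc
  calc |φ' q - φ' p| = |∫ x in p..q, φ'' x| := by rw [hftc]
    _ ≤ |∫ x in p..q, W * x ^ (α - 2) + c| := habs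
    _ = W * ((q ^ (α - 1) - p ^ (α - 1)) / (α - 1)) + c * (q - p) := hval
    _ ≤ W * ((q - p) ^ (α - 1) / (α - 1)) + c * (q - p) ^ (α - 1) := by linarith
    _ = (W / (α - 1) + c) * (q - p) ^ (α - 1) := by ring

theorem second_modulus_bound_main (α : ℝ) (hα1 : 3 / 2 ≤ α) (hα2 : α < 2)
    (W c : ℝ) (hW : 0 < W) (hc : 0 ≤ c) (φ φ' φ'' : ℝ → ℝ)
    (hcont : ContinuousOn φ (Set.Icc 0 1))
    (hd1 : ∀ p ∈ Set.Ioo (0:ℝ) 1, HasDerivAt φ (φ' p) p)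
    (key : ∀ {p q : ℝ}, 0 < p → p < q → q < 1 →
      |φ' q - φ' p| ≤ (W / (α - 1) + c) * (q - p) ^ (α - 1)) :
    ∃ C > 0, ∀ t ∈ Set.Ioo (0:ℝ) 1, ∀ h ∈ Set.Ioc (0:ℝ) t, ∀ x : ℝ,
      x - h ∈ Set.Icc (0:ℝ) 1 → x + h ∈ Set.Icc (0:ℝ) 1 →
      |φ (x + h) - 2 * φ x + φ (x - h)| ≤ C * t ^ α := by
  have hαm1 : (0:ℝ) < α - 1 := by linarith
  set K : ℝ := W / (α - 1) + c with hK
  have hK0 : 0 < K := by positivity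
  refine ⟨2 * K, by positivity, ?_⟩
  rintro t ⟨ht0, ht1⟩ h ⟨hh0, hht⟩ x ⟨hxh0, _⟩ ⟨_, hxh1⟩
  set g : ℝ → ℝ := fun s => φ (x + s) + φ (x - s) with hg
  have hx0 : h ≤ x := by linarith
  have hx1 : x + h ≤ 1 := hxh1
  -- continuity of g on [0, h]
  have hgc : ContinuousOn g (Set.Icc 0 h) := by
    apply ContinuousOn.add
    · exact hcont.comp (Continuous.continuousOn (by continuity))
        (fun s hs => ⟨by linarith [hs.1], by linarith [hs.2]⟩)
    · exact hcont.comp (Continuous.continuousOn (by continuity))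
        (fun s hs => ⟨by linarith [hs.2], by linarith [hs.1, hh0.le]⟩)
  -- derivative of g on (0, h)
  have hgd : ∀ s ∈ Set.Ioo (0:ℝ) h, HasDerivAt g (φ' (x + s) - φ' (x - s)) s := by
    intro s hs
    have hxs1 : x + s ∈ Set.Ioo (0:ℝ) 1 := ⟨by linarith [hs.1], by linarith [hs.2]⟩
    have hxs2 : x - s ∈ Set.Ioo (0:ℝ) 1 := ⟨by linarith [hs.2], by linarith [hs.1]⟩
    have d1 : HasDerivAt (fun s : ℝ => φ (x + s)) (φ' (x + s) * 1) s :=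
      (hd1 _ hxs1).comp s ((hasDerivAt_id s).const_add x)
    have d2 : HasDerivAt (fun s : ℝ => φ (x - s)) (φ' (x - s) * (-1)) s :=
      (hd1 _ hxs2).comp s ((hasDerivAt_id s).const_sub x)
    have := d1.add d2
    exact this.congr_deriv (by ring)
  obtain ⟨s0, hs0, hslope⟩ := exists_hasDerivAt_eq_slope g
    (fun s => φ' (x + s) - φ' (x - s)) hh0 hgc hgd
  have hdiff : g h - g 0 = (φ' (x + s0) - φ' (x - s0)) * h := by
    field_simp at hslope
    linarith [hslope]
  have hkey := key (p := x - s0) (q := x + s0)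
    (by linarith [hs0.2]) (by linarith [hs0.1]) (by linarith [hs0.2])
  have h2s : x + s0 - (x - s0) = 2 * s0 := by ring
  rw [h2s] at hkey
  -- (2 s0)^(α-1) ≤ 2 h^(α-1)
  have hs0pos : 0 < s0 := hs0.1
  have hb1 : (2 * s0) ^ (α - 1) ≤ (2 * h) ^ (α - 1) :=
    Real.rpow_le_rpow (by positivity) (by linarith [hs0.2]) hαm1.le
  have hb2 : (2 * h) ^ (α - 1) = 2 ^ (α - 1) * h ^ (α - 1) :=
    Real.mul_rpow (by norm_num) hh0.le
  have hb3 : (2:ℝ) ^ (α - 1) ≤ 2 := by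
    calc (2:ℝ) ^ (α - 1) ≤ (2:ℝ) ^ (1:ℝ) :=
      Real.rpow_le_rpow_of_exponent_le one_le_two (by linarith)
    _ = 2 := Real.rpow_one 2
  have hb4 : (2 * s0) ^ (α - 1) ≤ 2 * h ^ (α - 1) := by
    have hhp : (0:ℝ) ≤ h ^ (α - 1) := Real.rpow_nonneg hh0.le _
    calc (2 * s0) ^ (α - 1) ≤ 2 ^ (α - 1) * h ^ (α - 1) := by rw [← hb2]; exact hb1
    _ ≤ 2 * h ^ (α - 1) := by nlinarith
  have hgoal : |φ (x + h) - 2 * φ x + φ (x - h)| ≤ 2 * K * h ^ α := by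
    have hg0 : g 0 = 2 * φ x := by simp [hg]; ring
    have hghh : g h = φ (x + h) + φ (x - h) := rfl
    have : |φ (x + h) - 2 * φ x + φ (x - h)| = |g h - g 0| := by
      rw [hghh, hg0]; ring_nf
    rw [this, hdiff, abs_mul, abs_of_nonneg hh0.le]
    have step : |φ' (x + s0) - φ' (x - s0)| * h ≤ K * (2 * h ^ (α - 1)) * h := by
      apply mul_le_mul_of_nonneg_right _ hh0.le
      exact hkey.trans (mul_le_mul_of_nonneg_left hb4 hK0.le)
    refine step.trans (le_of_eq ?_)
    have hpow : h ^ (α - 1) * h = h ^ α := by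
      rw [show α = α - 1 + 1 by ring, Real.rpow_add_one hh0.ne']
      ring_nf
    rw [show K * (2 * h ^ (α - 1)) * h = 2 * K * (h ^ (α - 1) * h) by ring, hpow]
  refine hgoal.trans ?_
  have : h ^ α ≤ t ^ α := Real.rpow_le_rpow hh0.le hht (by linarith)
  nlinarith [Real.rpow_nonneg hh0.le α]


/-- If `φ` is twice continuously differentiable on `(0,1)` with
`φ'(0) = 0` (as a right limit) and `|φ''(p)| ≤ W p^(α-2) + c` with `α ∈ [3/2, 2)`,
then the second-order modulus of smoothness satisfies `ω²(φ,t) ≤ C t^α`. -/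
theorem second_modulus_bound (α : ℝ) (hα1 : 3 / 2 ≤ α) (hα2 : α < 2)
    (W c : ℝ) (hW : 0 < W) (hc : 0 ≤ c) (φ φ' φ'' : ℝ → ℝ)
    (hcont : ContinuousOn φ (Set.Icc 0 1))
    (hd1 : ∀ p ∈ Set.Ioo (0:ℝ) 1, HasDerivAt φ (φ' p) p)
    (hd2 : ∀ p ∈ Set.Ioo (0:ℝ) 1, HasDerivAt φ' (φ'' p) p)
    (hd2cont : ContinuousOn φ'' (Set.Ioo 0 1))
    (hlim : Filter.Tendsto φ' (nhdsWithin 0 (Set.Ioi 0)) (nhds 0))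
    (hbound : ∀ p ∈ Set.Ioo (0:ℝ) 1, |φ'' p| ≤ W * p ^ (α - 2) + c) :
    ∃ C > 0, ∀ t ∈ Set.Ioo (0:ℝ) 1, ∀ h ∈ Set.Ioc (0:ℝ) t, ∀ x : ℝ,
      x - h ∈ Set.Icc (0:ℝ) 1 → x + h ∈ Set.Icc (0:ℝ) 1 →
      |φ (x + h) - 2 * φ x + φ (x - h)| ≤ C * t ^ α := by
  exact second_modulus_bound_main α hα1 hα2 W c hW hc φ φ' φ'' hcont hd1
    (fun {p q} hp hpq hq =>
      holder_deriv α hα1 hα2 W c hW hc φ' φ'' hd2 hd2cont hbound hp hpq hq)
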